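/- arXiv:0906.1178 — 2 statements merged into one kernel-verified Lean document; each statement's English description precedes it below -/
import Mathlib

section
/- Fix a real number a ≠ 0 and let G be the subgroup of isometries of ℝ³ generated by the four maps R₀(x,y,z) = (−z, −y + a, −x), R₁(x,y,z) = (y, x, z), R₂(x,y,z) = (−z, y, −x), R̂₂(x,y,z) = (z, y, x). Then the orbit of the origin under G (the vertex set of the regular complex K₄(1,2)) equals the cubic lattice aℤ³ = {(am₁, am₂, am₃) : m₁, m₂, m₃ ∈ ℤ}. -/
/- STATEMENT 13: For a ≠ 0, the orbit of the origin under the group generated by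
R₀(x,y,z) = (−z, −y + a, −x), R₁(x,y,z) = (y, x, z), R₂(x,y,z) = (−z, y, −x),
R̂₂(x,y,z) = (z, y, x) (the vertex set of K₄(1,2)) is the cubic lattice aℤ³. -/

noncomputable section

abbrev E3 : Type := EuclideanSpace ℝ (Fin 3)

def pt (x y z : ℝ) : E3 := WithLp.toLp 2 ![x, y, z]

@[simp] lemma pt_apply0 (x y z : ℝ) : pt x y z 0 = x := rfl
@[simp] lemma pt_apply1 (x y z : ℝ) : pt x y z 1 = y := rfl
@[simp] lemma pt_apply2 (x y z : ℝ) : pt x y z 2 = z := rfl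

lemma E3_ext {p q : E3} (h0 : p 0 = q 0) (h1 : p 1 = q 1) (h2 : p 2 = q 2) : p = q := by
  ext i
  fin_cases i <;> assumption

theorem vertex_set_K4_12
    (a : ℝ) (ha : a ≠ 0)
    (R0 R1 R2 R2' : E3 ≃ᵢ E3)
    (hR0 : ∀ x : E3, R0 x = pt (-(x 2)) (-(x 1) + a) (-(x 0)))
    (hR1 : ∀ x : E3, R1 x = pt (x 1) (x 0) (x 2))
    (hR2 : ∀ x : E3, R2 x = pt (-(x 2)) (x 1) (-(x 0)))
    (hR2' : ∀ x : E3, R2' x = pt (x 2) (x 1) (x 0)) :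
    {y : E3 | ∃ g ∈ Subgroup.closure {R0, R1, R2, R2'}, g 0 = y} =
      {y : E3 | ∃ m1 m2 m3 : ℤ, y 0 = a * m1 ∧ y 1 = a * m2 ∧ y 2 = a * m3} := by
  set L : E3 → Prop := fun p => ∃ m1 m2 m3 : ℤ, p 0 = a * m1 ∧ p 1 = a * m2 ∧ p 2 = a * m3
    with hL
  set K := Subgroup.closure ({R0, R1, R2, R2'} : Set (E3 ≃ᵢ E3)) with hK
  ext y
  simp only [Set.mem_setOf_eq]
  constructor
  · rintro ⟨g, hg, rfl⟩
    -- every element of the closure preserves the lattice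
    have key : ∀ g' ∈ K, ∀ p : E3, L p ↔ L (g' p) := by
      intro g' hg'
      induction hg' using Subgroup.closure_induction with
      | mem x hx =>
        -- each generator is an involution, so it suffices to prove one direction for all gens
        have fwd : ∀ e ∈ ({R0, R1, R2, R2'} : Set (E3 ≃ᵢ E3)), ∀ p : E3, L p → L (e p) := by
          intro e he p hp
          obtain ⟨m1, m2, m3, h1, h2, h3⟩ := hp
          rcases he with rfl | rfl | rfl | rfl
          · exact ⟨-m3, 1 - m2, -m1, by rw [hR0]; push_cast; simp [h1, h2, h3]; ring⟩
          · exact ⟨m2, m1, m3, by rw [hR1]; simp [h1, h2, h3]⟩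
          · exact ⟨-m3, m2, -m1, by rw [hR2]; push_cast; simp [h1, h2, h3]⟩
          · exact ⟨m3, m2, m1, by rw [hR2']; simp [h1, h2, h3]⟩
        have invol : ∀ e ∈ ({R0, R1, R2, R2'} : Set (E3 ≃ᵢ E3)), ∀ p : E3, e (e p) = p := by
          intro e he p
          rcases he with rfl | rfl | rfl | rfl
          · rw [hR0, hR0]; exact E3_ext (by simp) (by simp) (by simp)
          · rw [hR1, hR1]; exact E3_ext (by simp) (by simp) (by simp)
          · rw [hR2, hR2]; exact E3_ext (by simp) (by simp) (by simp)
          · rw [hR2', hR2']; exact E3_ext (by simp) (by simp) (by simp)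
        intro p
        refine ⟨fwd x hx p, fun h => ?_⟩
        have := fwd x hx (x p) h
        rwa [invol x hx p] at this
      | one => intro p; simp
      | mul u v hu hv ihu ihv =>
        intro p
        rw [IsometryEquiv.mul_apply]
        exact (ihv p).trans (ihu (v p))
      | inv u hu ih =>
        intro p
        have := (ih (u⁻¹ p)).symm
        rwa [IsometryEquiv.apply_inv_self] at this
    have h0 : L (0 : E3) := ⟨0, 0, 0, by norm_num⟩
    exact (key g hg 0).mp h0
  · rintro ⟨m1, m2, m3, h1, h2, h3⟩
    -- membership helpers
    have hmR0 : R0 ∈ K := Subgroup.subset_closure (by simp)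
    have hmR1 : R1 ∈ K := Subgroup.subset_closure (by simp)
    have hmR2 : R2 ∈ K := Subgroup.subset_closure (by simp)
    have hmR2' : R2' ∈ K := Subgroup.subset_closure (by simp)
    -- the basic glide-type elements
    set Zy : E3 ≃ᵢ E3 := ((R0 * R2') * (R2 * R2')) * (R1 * (R2 * R2') * R1) with hZydef
    have hZy : ∀ x : E3, Zy x = pt (x 0) (x 1 + a) (-(x 2)) := by
      intro x
      simp only [hZydef, IsometryEquiv.mul_apply]
      rw [hR1, hR2', hR2, hR1, hR2', hR2, hR2', hR0]
      exact E3_ext (by simp) (by simp) (by simp)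
    set Zx : E3 ≃ᵢ E3 := R1 * Zy * R1 with hZxdef
    have hZx : ∀ x : E3, Zx x = pt (x 0 + a) (x 1) (-(x 2)) := by
      intro x
      simp only [hZxdef, IsometryEquiv.mul_apply]
      rw [hR1, hZy, hR1]
      exact E3_ext (by simp) (by simp) (by simp)
    set S : E3 ≃ᵢ E3 := R2' * R1 * R2' with hSdef
    have hS : ∀ x : E3, S x = pt (x 0) (x 2) (x 1) := by
      intro x
      simp only [hSdef, IsometryEquiv.mul_apply]
      rw [hR2', hR1, hR2']
      exact E3_ext (by simp) (by simp) (by simp)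
    set Zz : E3 ≃ᵢ E3 := S * Zy * S with hZzdef
    have hZz : ∀ x : E3, Zz x = pt (x 0) (-(x 1)) (x 2 + a) := by
      intro x
      simp only [hZzdef, IsometryEquiv.mul_apply]
      rw [hS, hZy, hS]
      exact E3_ext (by simp) (by simp) (by simp)
    have hmZy : Zy ∈ K := by
      exact mul_mem (mul_mem (mul_mem hmR0 hmR2') (mul_mem hmR2 hmR2'))
        (mul_mem (mul_mem hmR1 (mul_mem hmR2 hmR2')) hmR1)
    have hmZx : Zx ∈ K := mul_mem (mul_mem hmR1 hmZy) hmR1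
    have hmS : S ∈ K := mul_mem (mul_mem hmR2' hmR1) hmR2'
    have hmZz : Zz ∈ K := mul_mem (mul_mem hmS hmZy) hmS
    -- inverse formulas
    have hZyinv : ∀ x : E3, Zy⁻¹ x = pt (x 0) (x 1 - a) (-(x 2)) := by
      intro x
      apply Zy.injective
      rw [IsometryEquiv.apply_inv_self, hZy]
      exact E3_ext (by simp) (by simp) (by simp)
    have hZxinv : ∀ x : E3, Zx⁻¹ x = pt (x 0 - a) (x 1) (-(x 2)) := by
      intro x
      apply Zx.injective
      rw [IsometryEquiv.apply_inv_self, hZx]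
      exact E3_ext (by simp) (by simp) (by simp)
    have hZzinv : ∀ x : E3, Zz⁻¹ x = pt (x 0) (-(x 1)) (x 2 - a) := by
      intro x
      apply Zz.injective
      rw [IsometryEquiv.apply_inv_self, hZz]
      exact E3_ext (by simp) (by simp) (by simp)
    -- integer power formulas
    have neg_one_ne : (-1 : ℝ) ≠ 0 := by norm_num
    have hZyp : ∀ n : ℤ, ∀ x : E3,
        (Zy ^ n) x = pt (x 0) (x 1 + n * a) ((-1 : ℝ) ^ n * x 2) := by
      intro n
      induction n using Int.induction_on with
      | zero => intro x; simp only [zpow_zero, IsometryEquiv.coe_one, id_eq]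
                exact E3_ext (by simp) (by simp) (by simp)
      | succ n ih =>
        intro x
        rw [zpow_add_one, IsometryEquiv.mul_apply, ih (Zy x), hZy x]
        refine E3_ext (by simp) (by push_cast; simp; ring) ?_
        simp only [pt_apply2, zpow_add_one₀ neg_one_ne]
        ring
      | pred n ih =>
        intro x
        rw [show (-(n : ℤ) - 1) = (-1) + (-(n : ℤ)) by ring, zpow_add,
          IsometryEquiv.mul_apply, zpow_neg_one, hZyinv, ih x]
        refine E3_ext (by simp) (by push_cast; simp; ring) ?_
        rw [show ((-1 : ℤ) + (-(n : ℤ))) = (-(n : ℤ)) + (-1) by ring,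
          zpow_add₀ neg_one_ne]
        simp only [pt_apply2, pt_apply1, zpow_neg_one]
        norm_num
    have hZxp : ∀ n : ℤ, ∀ x : E3,
        (Zx ^ n) x = pt (x 0 + n * a) (x 1) ((-1 : ℝ) ^ n * x 2) := by
      intro n
      induction n using Int.induction_on with
      | zero => intro x; simp only [zpow_zero, IsometryEquiv.coe_one, id_eq]
                exact E3_ext (by simp) (by simp) (by simp)
      | succ n ih =>
        intro x
        rw [zpow_add_one, IsometryEquiv.mul_apply, ih (Zx x), hZx x]
        refine E3_ext (by push_cast; simp; ring) (by simp) ?_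
        simp only [pt_apply2, zpow_add_one₀ neg_one_ne]
        ring
      | pred n ih =>
        intro x
        rw [show (-(n : ℤ) - 1) = (-1) + (-(n : ℤ)) by ring, zpow_add,
          IsometryEquiv.mul_apply, zpow_neg_one, hZxinv, ih x]
        refine E3_ext (by push_cast; simp; ring) (by simp) ?_
        rw [show ((-1 : ℤ) + (-(n : ℤ))) = (-(n : ℤ)) + (-1) by ring,
          zpow_add₀ neg_one_ne]
        simp only [pt_apply2, pt_apply1, zpow_neg_one]
        norm_num
    have hZzp : ∀ n : ℤ, ∀ x : E3,
        (Zz ^ n) x = pt (x 0) ((-1 : ℝ) ^ n * x 1) (x 2 + n * a) := by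
      intro n
      induction n using Int.induction_on with
      | zero => intro x; simp only [zpow_zero, IsometryEquiv.coe_one, id_eq]
                exact E3_ext (by simp) (by simp) (by simp)
      | succ n ih =>
        intro x
        rw [zpow_add_one, IsometryEquiv.mul_apply, ih (Zz x), hZz x]
        refine E3_ext (by simp) ?_ (by push_cast; simp; ring)
        simp only [pt_apply1, zpow_add_one₀ neg_one_ne]
        ring
      | pred n ih =>
        intro x
        rw [show (-(n : ℤ) - 1) = (-1) + (-(n : ℤ)) by ring, zpow_add,
          IsometryEquiv.mul_apply, zpow_neg_one, hZzinv, ih x]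
        refine E3_ext (by simp) ?_ (by push_cast; simp; ring)
        rw [show ((-1 : ℤ) + (-(n : ℤ))) = (-(n : ℤ)) + (-1) by ring,
          zpow_add₀ neg_one_ne]
        simp only [pt_apply2, pt_apply1, zpow_neg_one]
        norm_num
    -- the witness group element
    set m3' : ℤ := if Even (m1 + m2) then m3 else -m3 with hm3'
    refine ⟨Zy ^ m2 * Zx ^ m1 * Zz ^ m3', by
        exact mul_mem (mul_mem (zpow_mem hmZy m2) (zpow_mem hmZx m1)) (zpow_mem hmZz m3'), ?_⟩
    have hz0 : ∀ i : Fin 3, (0 : E3) i = 0 := fun i => rfl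
    rw [IsometryEquiv.mul_apply, IsometryEquiv.mul_apply, hZzp, hZxp, hZyp]
    refine E3_ext ?_ ?_ ?_
    · simp [hz0, h1, mul_comm]
    · simp [hz0, h2, mul_comm]
    · simp only [pt_apply2, pt_apply0, pt_apply1, hz0, h3]
      rw [← mul_assoc, ← zpow_add₀ neg_one_ne]
      rcases Int.even_or_odd (m1 + m2) with he | ho
      · have he' : Even (m2 + m1) := by rwa [add_comm] at he
        rw [hm3', if_pos he, he'.neg_one_zpow]
        push_cast
        ring
      · have ho' : Odd (m2 + m1) := by rwa [add_comm] at ho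
        have : ¬ Even (m1 + m2) := by simpa [Int.not_even_iff_odd] using ho
        rw [hm3', if_neg this, ho'.neg_one_zpow]
        push_cast
        ring
end
end

section
/- Fix a real number a ≠ 0 and consider the two isometries of ℝ³ given by R₀(x,y,z) = (−z + a, −y − a, −x + a) and R₁(x,y,z) = (y, x, z). Then the orbit of the origin under the subgroup generated by R₀ and R₁ is exactly the six-point set {(0,0,0), (a,−a,a), (0,−2a,2a), (−a,−a,3a), (−2a,0,2a), (−a,a,a)} (the vertex set of the skew hexagonal base face of the regular complex K₇(1,2)). -/
/- STATEMENT 17: For a ≠ 0, the orbit of the origin under the group generated by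
R₀(x,y,z) = (−z + a, −y − a, −x + a) and R₁(x,y,z) = (y, x, z) is exactly the six-point set
{(0,0,0), (a,−a,a), (0,−2a,2a), (−a,−a,3a), (−2a,0,2a), (−a,a,a)} (the vertex set of the
skew hexagonal base face of K₇(1,2)). -/

noncomputable section

lemma pt_eq {x y z x' y' z' : ℝ} (h1 : x = x') (h2 : y = y') (h3 : z = z') :
    pt x y z = pt x' y' z' := by subst h1 h2 h3; rfl

theorem base_face_K7_12
    (a : ℝ) (ha : a ≠ 0)
    (R0 R1 : E3 ≃ᵢ E3)
    (hR0 : ∀ x : E3, R0 x = pt (-(x 2) + a) (-(x 1) - a) (-(x 0) + a))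
    (hR1 : ∀ x : E3, R1 x = pt (x 1) (x 0) (x 2)) :
    {y : E3 | ∃ g ∈ Subgroup.closure {R0, R1}, g 0 = y} =
      ({pt 0 0 0, pt a (-a) a, pt 0 (-2 * a) (2 * a), pt (-a) (-a) (3 * a),
        pt (-2 * a) 0 (2 * a), pt (-a) a a} : Set E3) := by
  have hv0 : ∀ x y z : ℝ, (pt x y z) 0 = x := fun _ _ _ => rfl
  have hv1 : ∀ x y z : ℝ, (pt x y z) 1 = y := fun _ _ _ => rfl
  have hv2 : ∀ x y z : ℝ, (pt x y z) 2 = z := fun _ _ _ => rfl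
  have hR0' : ∀ x y z : ℝ, R0 (pt x y z) = pt (-z + a) (-y - a) (-x + a) := by
    intro x y z; rw [hR0, hv0, hv1, hv2]
  have hR1' : ∀ x y z : ℝ, R1 (pt x y z) = pt y x z := by
    intro x y z; rw [hR1, hv0, hv1, hv2]
  have h0 : (0 : E3) = pt 0 0 0 := by
    ext i; fin_cases i <;> rfl
  set S : Set E3 := ({pt 0 0 0, pt a (-a) a, pt 0 (-2 * a) (2 * a), pt (-a) (-a) (3 * a),
        pt (-2 * a) 0 (2 * a), pt (-a) a a} : Set E3) with hSdef
  -- R0 is an involution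
  have hx' : ∀ x : E3, x = pt (x 0) (x 1) (x 2) := by
    intro x; ext i; fin_cases i <;> rfl
  have hR0sq : ∀ x : E3, R0 (R0 x) = x := by
    intro x
    rw [hx' x, hR0', hR0']
    apply pt_eq <;> ring
  have hR1sq : ∀ x : E3, R1 (R1 x) = x := by
    intro x
    rw [hx' x, hR1', hR1']
  have hR0inv : ∀ x : E3, R0⁻¹ x = R0 x := by
    intro x
    apply R0.injective
    rw [hR0sq, IsometryEquiv.apply_inv_self]
  have hR1inv : ∀ x : E3, R1⁻¹ x = R1 x := by
    intro x
    apply R1.injective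
    rw [hR1sq, IsometryEquiv.apply_inv_self]
  have memS : ∀ y, y ∈ S ↔ (y = pt 0 0 0 ∨ y = pt a (-a) a ∨ y = pt 0 (-2 * a) (2 * a) ∨
      y = pt (-a) (-a) (3 * a) ∨ y = pt (-2 * a) 0 (2 * a) ∨ y = pt (-a) a a) := by
    intro y; simp [hSdef, Set.mem_insert_iff]
  have hS_R0 : ∀ y ∈ S, R0 y ∈ S := by
    intro y hy
    rw [memS] at hy ⊢
    rcases hy with rfl | rfl | rfl | rfl | rfl | rfl <;> rw [hR0']
    · exact Or.inr (Or.inl (pt_eq (by ring) (by ring) (by ring)))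
    · exact Or.inl (pt_eq (by ring) (by ring) (by ring))
    · exact Or.inr (Or.inr (Or.inr (Or.inr (Or.inr (pt_eq (by ring) (by ring) (by ring))))))
    · exact Or.inr (Or.inr (Or.inr (Or.inr (Or.inl (pt_eq (by ring) (by ring) (by ring))))))
    · exact Or.inr (Or.inr (Or.inr (Or.inl (pt_eq (by ring) (by ring) (by ring)))))
    · exact Or.inr (Or.inr (Or.inl (pt_eq (by ring) (by ring) (by ring))))
  have hS_R1 : ∀ y ∈ S, R1 y ∈ S := by
    intro y hy
    rw [memS] at hy ⊢
    rcases hy with rfl | rfl | rfl | rfl | rfl | rfl <;> rw [hR1']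
    · exact Or.inl (pt_eq (by ring) (by ring) (by ring))
    · exact Or.inr (Or.inr (Or.inr (Or.inr (Or.inr (pt_eq (by ring) (by ring) (by ring))))))
    · exact Or.inr (Or.inr (Or.inr (Or.inr (Or.inl (pt_eq (by ring) (by ring) (by ring))))))
    · exact Or.inr (Or.inr (Or.inr (Or.inl (pt_eq (by ring) (by ring) (by ring)))))
    · exact Or.inr (Or.inr (Or.inl (pt_eq (by ring) (by ring) (by ring))))
    · exact Or.inr (Or.inl (pt_eq (by ring) (by ring) (by ring)))
  ext y
  constructor
  · rintro ⟨g, hg, rfl⟩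
    have key : ∀ z ∈ S, g z ∈ S ∧ g⁻¹ z ∈ S := by
      refine Subgroup.closure_induction ?_ ?_ ?_ ?_ hg
      · rintro x (rfl | rfl)
        · intro z hz
          refine ⟨hS_R0 z hz, ?_⟩
          rw [hR0inv]; exact hS_R0 z hz
        · intro z hz
          refine ⟨hS_R1 z hz, ?_⟩
          rw [hR1inv]; exact hS_R1 z hz
      · intro z hz; exact ⟨by simpa using hz, by simpa using hz⟩
      · intro x y' _ _ hx hy' z hz
        refine ⟨?_, ?_⟩
        · have := (hx (y' z) (hy' z hz).1).1
          simpa [IsometryEquiv.mul_apply] using this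
        · have := (hy' (x⁻¹ z) (hx z hz).2).2
          have h2 : (x * y')⁻¹ z = y'⁻¹ (x⁻¹ z) := by
            rw [mul_inv_rev]; rfl
          rw [h2]; exact this
      · intro x _ hx z hz
        exact ⟨(hx z hz).2, by simpa using (hx z hz).1⟩
    have h0S : (0 : E3) ∈ S := by rw [memS]; exact Or.inl h0
    exact (key 0 h0S).1
  · intro hy
    have hR0mem : R0 ∈ Subgroup.closure ({R0, R1} : Set (E3 ≃ᵢ E3)) :=
      Subgroup.subset_closure (Set.mem_insert _ _)
    have hR1mem : R1 ∈ Subgroup.closure ({R0, R1} : Set (E3 ≃ᵢ E3)) :=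
      Subgroup.subset_closure (Set.mem_insert_of_mem _ rfl)
    rw [memS] at hy
    rcases hy with rfl | rfl | rfl | rfl | rfl | rfl
    · exact ⟨1, one_mem _, h0.symm ▸ rfl⟩
    · refine ⟨R0, hR0mem, ?_⟩
      rw [h0, hR0']
      exact pt_eq (by ring) (by ring) (by ring)
    · refine ⟨R0 * R1 * R0, mul_mem (mul_mem hR0mem hR1mem) hR0mem, ?_⟩
      show R0 (R1 (R0 0)) = _
      rw [h0, hR0', hR1', hR0']
      exact pt_eq (by ring) (by ring) (by ring)
    · refine ⟨R0 * R1 * R0 * R1 * R0,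
        mul_mem (mul_mem (mul_mem (mul_mem hR0mem hR1mem) hR0mem) hR1mem) hR0mem, ?_⟩
      show R0 (R1 (R0 (R1 (R0 0)))) = _
      rw [h0, hR0', hR1', hR0', hR1', hR0']
      exact pt_eq (by ring) (by ring) (by ring)
    · refine ⟨R1 * R0 * R1 * R0,
        mul_mem (mul_mem (mul_mem hR1mem hR0mem) hR1mem) hR0mem, ?_⟩
      show R1 (R0 (R1 (R0 0))) = _
      rw [h0, hR0', hR1', hR0', hR1']
      exact pt_eq (by ring) (by ring) (by ring)
    · refine ⟨R1 * R0, mul_mem hR1mem hR0mem, ?_⟩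
      show R1 (R0 0) = _
      rw [h0, hR0', hR1']
      exact pt_eq (by ring) (by ring) (by ring)
end
end
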